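/- Let Φ be an irreducible, positive, trace preserving linear map on M_n(ℂ), Q ∈ M_n(ℂ) an orthogonal projection with Q ≠ 0 and Q ≠ I_n, P = I_n − Q, ℙ(X) = PXP, ℚ(X) = QXQ, and H = Φ∘(I − ℚ∘Φ)⁻¹. Then for every unit vector φ ∈ ℂⁿ with ρ_φ = φφ*, the series τ(φ→V) = Σ_{r≥1} r·Tr(ℙ(Φ((ℚ∘Φ)^{r−1}(ρ_φ)))) converges and τ(φ→V) = Tr(((I − ℚ∘Φ)⁻¹)(ρ_φ)) = Tr(H(ρ_φ)). -/

import Mathlib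

open Matrix ComplexOrder

attribute [local instance] Matrix.normedAddCommGroup Matrix.normedSpace

variable {n : ℕ}

noncomputable instance instNormedRingMatCLM :
    NormedRing (Matrix (Fin n) (Fin n) ℂ →L[ℂ] Matrix (Fin n) (Fin n) ℂ) :=
  ContinuousLinearMap.toNormedRing

example : FiniteDimensional ℂ (Matrix (Fin n) (Fin n) ℂ) := by infer_instance

lemma diag_nonneg' {A : Matrix (Fin n) (Fin n) ℂ} (hA : A.PosSemidef) (i : Fin n) :
    0 ≤ A i i := by
  have := hA.dotProduct_mulVec_nonneg (Pi.single i 1)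
  simpa [← Pi.single_star, mulVec_single, single_dotProduct] using this

lemma trace_nonneg' {A : Matrix (Fin n) (Fin n) ℂ} (hA : A.PosSemidef) : 0 ≤ A.trace := by
  rw [Matrix.trace]
  exact Finset.sum_nonneg fun i _ => diag_nonneg' hA i

lemma entry_le_trace_re {A : Matrix (Fin n) (Fin n) ℂ} (hA : A.PosSemidef) (i j : Fin n) :
    ‖A i j‖ ≤ A.trace.re := by
  have hdiag : ∀ k, 0 ≤ (A k k).re ∧ (A k k).im = 0 := by
    intro k
    have := diag_nonneg' hA k
    rw [Complex.le_def] at this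
    exact ⟨this.1, this.2.symm⟩
  have htr : ∀ k, (A k k).re ≤ A.trace.re := by
    intro k
    rw [Matrix.trace, Complex.re_sum]
    exact Finset.single_le_sum (fun l _ => (hdiag l).1) (Finset.mem_univ k)
  rcases eq_or_ne i j with rfl | hij
  · have : ‖A i i‖ = (A i i).re := by
      rw [Complex.norm_def, Complex.normSq_apply, (hdiag i).2]
      simp [Real.sqrt_mul_self (hdiag i).1]
    rw [this]; exact htr i
  rcases eq_or_ne (A i j) 0 with h0 | h0
  · rw [h0, norm_zero]
    have := htr i
    linarith [(hdiag i).1]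
  · set c := A i j with hc
    set b : ℂ := -(starRingEnd ℂ c) / (‖c‖ : ℂ) with hb
    set x : Fin n → ℂ := Pi.single i 1 + Pi.single j b with hx
    have hkey := hA.dotProduct_mulVec_nonneg x
    have hji : A j i = starRingEnd ℂ c := by
      have h := hA.1.apply i j
      simp [hc, ← h, Complex.star_def]
    have hexp : star x ⬝ᵥ (A *ᵥ x) =
        A i i + c * b + (starRingEnd ℂ b) * (A j i) + (starRingEnd ℂ b) * b * A j j := by
      rw [hx]
      rw [star_add, ← Pi.single_star, ← Pi.single_star, star_one]
      rw [mulVec_add, mulVec_single, mulVec_single]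
      rw [add_dotProduct, dotProduct_add, dotProduct_add]
      rw [single_dotProduct, single_dotProduct, single_dotProduct, single_dotProduct]
      simp only [Pi.smul_apply, Matrix.col_apply, op_smul_eq_smul, smul_eq_mul]
      simp only [Complex.star_def, map_neg, map_div₀, _root_.map_mul, Complex.conj_conj,
        Complex.conj_ofReal]
      push_cast [hc]
      ring
    have habs : (‖c‖ : ℂ) ≠ 0 := by
      simpa using (norm_ne_zero_iff.mpr h0)
    have h1 : c * b = -(‖c‖ : ℂ) := by
      rw [hb]
      field_simp
      rw [Complex.mul_conj, Complex.normSq_eq_norm_sq]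
      push_cast
      ring
    have h2 : (starRingEnd ℂ b) * A j i = -(‖c‖ : ℂ) := by
      rw [hji, ← _root_.map_mul, mul_comm, h1]
      simp [Complex.conj_ofReal]
    have h3 : (starRingEnd ℂ b) * b * A j j = A j j := by
      have habsb : ‖b‖ = 1 := by
        rw [hb]
        simp [map_div₀, Complex.norm_conj,
          abs_of_nonneg (norm_nonneg c), div_self (norm_ne_zero_iff.mpr h0)]
      have : (starRingEnd ℂ b) * b = 1 := by
        rw [mul_comm, Complex.mul_conj, ← Complex.sq_norm, habsb]
        norm_num
      rw [this, one_mul]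
    rw [hexp, h1, h2, h3] at hkey
    rw [Complex.le_def] at hkey
    have hre := hkey.1
    simp only [Complex.add_re, Complex.neg_re, Complex.ofReal_re, Complex.zero_re] at hre
    have hi := htr i
    have hj := htr j
    linarith

lemma psd_norm_le_trace_re {A : Matrix (Fin n) (Fin n) ℂ} (hA : A.PosSemidef) :
    ‖A‖ ≤ A.trace.re := by
  have h0 : 0 ≤ A.trace.re := by
    have := trace_nonneg' hA
    rw [Complex.le_def] at this
    exact this.1
  rw [Matrix.norm_le_iff h0]
  exact fun i j => entry_le_trace_re hA i j

lemma abs_trace_le_norm (A : Matrix (Fin n) (Fin n) ℂ) :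
    ‖A.trace‖ ≤ n * ‖A‖ := by
  rw [Matrix.trace]
  calc ‖∑ i, A.diag i‖ ≤ ∑ i : Fin n, ‖A.diag i‖ := norm_sum_le _ _
    _ ≤ ∑ i : Fin n, ‖A‖ := by
        refine Finset.sum_le_sum fun i _ => ?_
        exact A.norm_entry_le_entrywise_sup_norm
    _ = n * ‖A‖ := by simp [mul_comm]

lemma herm_decomp {A : Matrix (Fin n) (Fin n) ℂ} (hA : A.IsHermitian) :
    ∃ P N : Matrix (Fin n) (Fin n) ℂ, P.PosSemidef ∧ N.PosSemidef ∧ A = P - N := by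
  classical
  set U : Matrix (Fin n) (Fin n) ℂ := (hA.eigenvectorUnitary : Matrix (Fin n) (Fin n) ℂ)
  set dp : Fin n → ℂ := fun i => ((max (hA.eigenvalues i) 0 : ℝ) : ℂ)
  set dn : Fin n → ℂ := fun i => ((max (-hA.eigenvalues i) 0 : ℝ) : ℂ)
  have hdp : (Matrix.diagonal dp).PosSemidef :=
    Matrix.PosSemidef.diagonal fun i => Complex.zero_le_real.2 (le_max_right _ _)
  have hdn : (Matrix.diagonal dn).PosSemidef :=
    Matrix.PosSemidef.diagonal fun i => Complex.zero_le_real.2 (le_max_right _ _)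
  refine ⟨U * Matrix.diagonal dp * Uᴴ, U * Matrix.diagonal dn * Uᴴ,
    hdp.mul_mul_conjTranspose_same U, hdn.mul_mul_conjTranspose_same U, ?_⟩
  have hdiff : Matrix.diagonal dp - Matrix.diagonal dn
      = Matrix.diagonal (Complex.ofReal ∘ hA.eigenvalues) := by
    ext i j
    rcases eq_or_ne i j with rfl | hij
    · simp only [Matrix.sub_apply, Matrix.diagonal_apply_eq, Function.comp_apply, dp, dn]
      rw [← Complex.ofReal_sub]
      congr 1
      rcases le_or_gt (hA.eigenvalues i) 0 with h | h
      · rw [max_eq_right h, max_eq_left (by linarith)]; ring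
      · rw [max_eq_left h.le, max_eq_right (by linarith)]; ring
    · simp [Matrix.diagonal_apply_ne _ hij]
  rw [← Matrix.sub_mul, ← Matrix.mul_sub, hdiff]
  have := hA.spectral_theorem
  rw [← Matrix.star_eq_conjTranspose]
  exact this

lemma gen_decomp (A : Matrix (Fin n) (Fin n) ℂ) :
    ∃ X1 X2 X3 X4 : Matrix (Fin n) (Fin n) ℂ, X1.PosSemidef ∧ X2.PosSemidef ∧
      X3.PosSemidef ∧ X4.PosSemidef ∧ A = X1 - X2 + Complex.I • (X3 - X4) := by
  set H : Matrix (Fin n) (Fin n) ℂ := ((1:ℂ)/2) • (A + Aᴴ) with hHdef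
  set K : Matrix (Fin n) (Fin n) ℂ := (-(Complex.I)/2) • (A - Aᴴ) with hKdef
  have hH : H.IsHermitian := by
    rw [Matrix.IsHermitian, hHdef, Matrix.conjTranspose_smul, Matrix.conjTranspose_add,
      Matrix.conjTranspose_conjTranspose, add_comm Aᴴ A]
    congr 1
    simp
  have hK : K.IsHermitian := by
    rw [Matrix.IsHermitian, hKdef, Matrix.conjTranspose_smul, Matrix.conjTranspose_sub,
      Matrix.conjTranspose_conjTranspose]
    rw [show (star (-(Complex.I)/2) : ℂ) = Complex.I/2 by simp [Complex.star_def],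
      ← neg_sub A Aᴴ, smul_neg, ← neg_smul, neg_div]
  have hsum : A = H + Complex.I • K := by
    ext i j
    simp only [hHdef, hKdef, Matrix.add_apply, Matrix.smul_apply, Matrix.sub_apply,
      Matrix.conjTranspose_apply, smul_eq_mul]
    have : Complex.I * Complex.I = -1 := Complex.I_mul_I
    field_simp
    ring_nf
    rw [Complex.I_sq]
    ring
  obtain ⟨P1, N1, hP1, hN1, hHd⟩ := herm_decomp hH
  obtain ⟨P2, N2, hP2, hN2, hKd⟩ := herm_decomp hK
  exact ⟨P1, N1, P2, N2, hP1, hN1, hP2, hN2, by rw [hsum, hHd, hKd]⟩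

lemma vecMulVec_posSemidef (φ : Fin n → ℂ) : (Matrix.vecMulVec φ (star φ)).PosSemidef := by
  refine Matrix.PosSemidef.of_dotProduct_mulVec_nonneg ?_ ?_
  · ext i j
    simp [Matrix.conjTranspose_apply, Matrix.vecMulVec_apply, Pi.star_apply, mul_comm]
  · intro x
    have hform : star x ⬝ᵥ (Matrix.vecMulVec φ (star φ) *ᵥ x) = (star x ⬝ᵥ φ) * (star φ ⬝ᵥ x) := by
      simp only [dotProduct, Matrix.mulVec, Matrix.vecMulVec_apply, Pi.star_apply,
        Finset.sum_mul, Finset.mul_sum]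
      rw [Finset.sum_comm]
      apply Finset.sum_congr rfl; intro i _
      apply Finset.sum_congr rfl; intro j _
      ring
    have hconj : star x ⬝ᵥ φ = star (star φ ⬝ᵥ x) := by
      simp [dotProduct, star_sum, mul_comm]
    rw [hform, hconj]
    exact star_mul_self_nonneg _

lemma vecMulVec_trace {φ : Fin n → ℂ} (hφ : star φ ⬝ᵥ φ = 1) :
    (Matrix.vecMulVec φ (star φ)).trace = 1 := by
  rw [Matrix.trace, ← hφ]
  simp [Matrix.diag, Matrix.vecMulVec_apply, dotProduct, mul_comm]

lemma pow_decay {A : Type*} [NormedRing A] (T : A) (D : ℝ)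
    (h : ∀ N : ℕ, 1 ≤ N → ‖T ^ N‖ ≤ D / N) :
    ∀ r : ℕ, 4 ≤ r → ‖T ^ r‖ ≤ (7 * D) ^ 4 / (r : ℝ) ^ 4 := by
  intro r hr
  have hD : 0 ≤ D := by
    have := h 1 le_rfl
    have h2 := norm_nonneg T
    simp at this
    linarith
  set k := r / 4 with hk
  have hk1 : 1 ≤ k := by omega
  set m := r - 3 * k with hm
  have hkm : k ≤ m := by omega
  have hm1 : 1 ≤ m := le_trans hk1 hkm
  have hreq : r = k + (k + (k + m)) := by omega
  have hr7 : r ≤ 7 * k := by omega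
  have hkpos : (0:ℝ) < k := by exact_mod_cast hk1
  have hmpos : (0:ℝ) < m := by exact_mod_cast hm1
  have hrpos : (0:ℝ) < r := by positivity
  have hnorm : ‖T ^ r‖ ≤ (D / k) * ((D / k) * ((D / k) * (D / m))) := by
    rw [hreq, pow_add, pow_add, pow_add]
    calc ‖T ^ k * (T ^ k * (T ^ k * T ^ m))‖
        ≤ ‖T ^ k‖ * ‖T ^ k * (T ^ k * T ^ m)‖ := norm_mul_le _ _
      _ ≤ ‖T ^ k‖ * (‖T ^ k‖ * ‖T ^ k * T ^ m‖) := by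
          gcongr; exact norm_mul_le _ _
      _ ≤ ‖T ^ k‖ * (‖T ^ k‖ * (‖T ^ k‖ * ‖T ^ m‖)) := by
          gcongr; exact norm_mul_le _ _
      _ ≤ (D / k) * ((D / k) * ((D / k) * (D / m))) := by
          have h1 := h k hk1
          have h2 := h m hm1
          gcongr <;> positivity
  have hDk : D / (k:ℝ) ≤ 7 * D / r := by
    rw [div_le_div_iff₀ hkpos hrpos]
    have : (r:ℝ) ≤ 7 * k := by exact_mod_cast hr7
    nlinarith
  have hDm : D / (m:ℝ) ≤ 7 * D / r := by
    have h1 : D / (m:ℝ) ≤ D / k := by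
      apply div_le_div_of_nonneg_left hD hkpos  -- maybe wrong name
      exact_mod_cast hkm
    linarith
  have hfinal : (D / k) * ((D / k) * ((D / k) * (D / m))) ≤ (7 * D / r) ^ 4 := by
    have hknn : 0 ≤ D / (k:ℝ) := by positivity
    have hmnn : 0 ≤ D / (m:ℝ) := by positivity
    have h7 : 0 ≤ 7 * D / (r:ℝ) := by positivity
    calc (D / k) * ((D / k) * ((D / k) * (D / m)))
        ≤ (7 * D / r) * ((7 * D / r) * ((7 * D / r) * (7 * D / r))) := by
          gcongr
      _ = (7 * D / r) ^ 4 := by ring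
  calc ‖T ^ r‖ ≤ (D / k) * ((D / k) * ((D / k) * (D / m))) := hnorm
    _ ≤ (7 * D / r) ^ 4 := hfinal
    _ = (7 * D) ^ 4 / (r:ℝ) ^ 4 := by rw [div_pow]

lemma summable_mul_pow {A : Type*} [NormedRing A] (T : A) (D : ℝ)
    (h : ∀ N : ℕ, 1 ≤ N → ‖T ^ N‖ ≤ D / N) :
    Summable (fun r : ℕ => ((r : ℝ) + 1) * ‖T ^ r‖) := by
  have hdecay := pow_decay T D h
  rw [← summable_nat_add_iff 4]
  have hg : Summable (fun s : ℕ => 2 * (7 * D) ^ 4 * (1 / (s:ℝ) ^ 3)) :=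
    (Real.summable_one_div_nat_pow.mpr (by norm_num)).mul_left _
  have hg4 : Summable (fun r : ℕ => 2 * (7 * D) ^ 4 * (1 / ((r + 4 : ℕ):ℝ) ^ 3)) :=
    (summable_nat_add_iff 4).mpr hg
  apply Summable.of_nonneg_of_le _ _ hg4
  · intro r
    positivity
  · intro r
    set s : ℕ := r + 4 with hs
    have hs4 : 4 ≤ s := by omega
    have hspos : (0:ℝ) < s := by positivity
    have h1 : ‖T ^ s‖ ≤ (7 * D) ^ 4 / (s:ℝ) ^ 4 := hdecay s hs4
    have h2 : ((s:ℕ):ℝ) + 1 ≤ 2 * s := by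
      have : (1:ℝ) ≤ s := by exact_mod_cast (by omega : 1 ≤ s)
      linarith
    calc ((s:ℝ) + 1) * ‖T ^ s‖ ≤ (2 * (s:ℝ)) * ((7 * D) ^ 4 / (s:ℝ) ^ 4) := by
          apply mul_le_mul h2 h1 (norm_nonneg _) (by positivity)
      _ = 2 * (7 * D) ^ 4 * (1 / (s:ℝ) ^ 3) := by
          field_simp


/-- With `R = (I − ℚ∘Φ)⁻¹` and `H = Φ∘R`, the mean hitting time series
`Σ_{r≥1} r·Tr(ℙ(Φ((ℚ∘Φ)^{r−1}(ρ_φ))))` converges to `Tr(R(ρ_φ))`, which equals `Tr(H(ρ_φ))`. -/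
theorem mean_hitting_time_eq_trace {n : ℕ}
    (Φ PP QQ R : Matrix (Fin n) (Fin n) ℂ →ₗ[ℂ] Matrix (Fin n) (Fin n) ℂ)
    (Q : Matrix (Fin n) (Fin n) ℂ)
    (hΦpos : ∀ X : Matrix (Fin n) (Fin n) ℂ, X.PosSemidef → (Φ X).PosSemidef)
    (hΦtr : ∀ X : Matrix (Fin n) (Fin n) ℂ, (Φ X).trace = X.trace)
    (hΦirr : ∀ p : Matrix (Fin n) (Fin n) ℂ, p.IsHermitian → p * p = p →
      (∀ X : Matrix (Fin n) (Fin n) ℂ, Φ (p * X * p) = p * Φ (p * X * p) * p) → p = 0 ∨ p = 1)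
    (hQherm : Q.IsHermitian) (hQidem : Q * Q = Q) (hQne0 : Q ≠ 0) (hQne1 : Q ≠ 1)
    (hPP : ∀ X : Matrix (Fin n) (Fin n) ℂ, PP X = (1 - Q) * X * (1 - Q))
    (hQQ : ∀ X : Matrix (Fin n) (Fin n) ℂ, QQ X = Q * X * Q)
    (hR1 : R ∘ₗ (LinearMap.id - QQ ∘ₗ Φ) = LinearMap.id)
    (hR2 : (LinearMap.id - QQ ∘ₗ Φ) ∘ₗ R = LinearMap.id)
    (φ : Fin n → ℂ) (hφ : star φ ⬝ᵥ φ = 1) :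
    HasSum (fun r : ℕ => ((r : ℂ) + 1) *
        (PP (Φ (((QQ ∘ₗ Φ) ^ r) (Matrix.vecMulVec φ (star φ))))).trace)
      ((R (Matrix.vecMulVec φ (star φ))).trace) ∧
    (R (Matrix.vecMulVec φ (star φ))).trace = (Φ (R (Matrix.vecMulVec φ (star φ)))).trace := by
  classical
  refine ⟨?_, (hΦtr _).symm⟩
  set ρ : Matrix (Fin n) (Fin n) ℂ := Matrix.vecMulVec φ (star φ) with hρdef
  set T : Matrix (Fin n) (Fin n) ℂ →ₗ[ℂ] Matrix (Fin n) (Fin n) ℂ := QQ ∘ₗ Φ with hTdef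
  have hρpsd : ρ.PosSemidef := vecMulVec_posSemidef φ
  -- T preserves PSD
  have hTpsd : ∀ X : Matrix (Fin n) (Fin n) ℂ, X.PosSemidef → (T X).PosSemidef := by
    intro X hX
    have h2 := (hΦpos X hX).mul_mul_conjTranspose_same Q
    rw [hQherm.eq] at h2
    have h1 : T X = Q * Φ X * Q := by rw [hTdef, LinearMap.comp_apply, hQQ]
    rw [h1]; exact h2
  have hTpow_psd : ∀ X : Matrix (Fin n) (Fin n) ℂ, X.PosSemidef →
      ∀ r : ℕ, ((T ^ r) X).PosSemidef := by
    intro X hX r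
    induction r with
    | zero => simpa using hX
    | succ r ih =>
        rw [pow_succ', Module.End.mul_apply]
        exact hTpsd _ ih
  -- trace identity
  have hkey : ∀ Z : Matrix (Fin n) (Fin n) ℂ, (PP Z).trace = Z.trace - (QQ Z).trace := by
    intro Z
    have h1Q : (1 - Q) * (1 - Q) = (1 - Q : Matrix (Fin n) (Fin n) ℂ) := by
      rw [sub_mul, one_mul, mul_sub, mul_one, hQidem]
      simp
    rw [hPP, hQQ, Matrix.trace_mul_cycle, h1Q, sub_mul, one_mul, Matrix.trace_sub,
      Matrix.trace_mul_cycle, hQidem]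
  have htr_step : ∀ X : Matrix (Fin n) (Fin n) ℂ,
      (PP (Φ X)).trace = X.trace - (T X).trace := by
    intro X
    rw [hkey, hΦtr]
    rfl
  have hstep : ∀ r : ℕ, (PP (Φ ((T ^ r) ρ))).trace
      = ((T ^ r) ρ).trace - ((T ^ (r + 1)) ρ).trace := by
    intro r
    rw [htr_step, pow_succ', Module.End.mul_apply]
  -- PSD of PP (Φ X)
  have hPPpsd : ∀ X : Matrix (Fin n) (Fin n) ℂ, X.PosSemidef → (PP (Φ X)).PosSemidef := by
    intro X hX
    have h1 : (1 - Q : Matrix (Fin n) (Fin n) ℂ)ᴴ = 1 - Q := by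
      rw [Matrix.conjTranspose_sub, Matrix.conjTranspose_one, hQherm.eq]
    have h2 := (hΦpos X hX).mul_mul_conjTranspose_same (1 - Q)
    rw [h1] at h2
    rw [hPP]; exact h2
  -- telescoping with R
  have htele : ∀ Y : Matrix (Fin n) (Fin n) ℂ, (R Y).trace - (R (T Y)).trace = Y.trace := by
    intro Y
    have h := congrArg (fun f => f Y) hR1
    simp only [LinearMap.comp_apply, LinearMap.sub_apply, LinearMap.id_apply, ← hTdef] at h
    rw [map_sub] at h
    calc (R Y).trace - (R (T Y)).trace = (R Y - R (T Y)).trace := (Matrix.trace_sub _ _).symm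
      _ = Y.trace := by rw [h]
  -- continuous linear map versions
  set R' : Matrix (Fin n) (Fin n) ℂ →L[ℂ] Matrix (Fin n) (Fin n) ℂ :=
    LinearMap.toContinuousLinearMap R with hR'def
  set T' : Matrix (Fin n) (Fin n) ℂ →L[ℂ] Matrix (Fin n) (Fin n) ℂ :=
    LinearMap.toContinuousLinearMap T with hT'def
  have hR'app : ∀ X, R' X = R X := fun X => rfl
  have hT'pow : ∀ (N : ℕ) (X : Matrix (Fin n) (Fin n) ℂ), (T' ^ N) X = (T ^ N) X := by
    intro N
    induction N with
    | zero => intro X; simp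
    | succ N ih =>
        intro X
        rw [pow_succ, pow_succ, ContinuousLinearMap.mul_apply, Module.End.mul_apply, ih]
        rfl
  -- key quantitative bound for PSD X
  have hC : ∀ X : Matrix (Fin n) (Fin n) ℂ, X.PosSemidef → ∀ N : ℕ,
      (N : ℝ) * ‖(T ^ N) X‖ ≤ ‖(R X).trace‖ + (n : ℝ) * ‖R'‖ * X.trace.re := by
    intro X hX N
    set s : ℕ → ℝ := fun r => ((T ^ r) X).trace.re with hsdef
    have hs_nonneg : ∀ r, 0 ≤ s r := by
      intro r
      have := trace_nonneg' (hTpow_psd X hX r)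
      rw [Complex.le_def] at this
      exact this.1
    have hs_anti : Antitone s := by
      apply antitone_nat_of_succ_le
      intro r
      have h1 : (PP (Φ ((T ^ r) X))).trace = ((T ^ r) X).trace - ((T ^ (r+1)) X).trace := by
        rw [htr_step, pow_succ', Module.End.mul_apply]
      have h2 := trace_nonneg' (hPPpsd _ (hTpow_psd X hX r))
      rw [h1, Complex.le_def] at h2
      have := h2.1
      simp only [Complex.sub_re, Complex.zero_re] at this
      simp only [hsdef]
      linarith
    have hsum_eq : ∑ r ∈ Finset.range N, ((T ^ r) X).trace
        = (R X).trace - (R ((T ^ N) X)).trace := by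
      have : ∀ r : ℕ, ((T ^ r) X).trace
          = (R ((T ^ r) X)).trace - (R ((T ^ (r+1)) X)).trace := by
        intro r
        rw [pow_succ', Module.End.mul_apply, htele]
      rw [Finset.sum_congr rfl fun r _ => this r, Finset.sum_range_sub']
      simp
    have hnormTN : ‖(T ^ N) X‖ ≤ s N := psd_norm_le_trace_re (hTpow_psd X hX N)
    have hNsN : (N : ℝ) * s N ≤ ∑ r ∈ Finset.range N, s r := by
      calc (N : ℝ) * s N = ∑ _r ∈ Finset.range N, s N := by
            rw [Finset.sum_const, Finset.card_range, nsmul_eq_mul]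
        _ ≤ ∑ r ∈ Finset.range N, s r :=
            Finset.sum_le_sum fun r hr => hs_anti (Finset.mem_range.mp hr).le
    have hsum_re : ∑ r ∈ Finset.range N, s r
        = ((R X).trace - (R ((T ^ N) X)).trace).re := by
      rw [← hsum_eq, Complex.re_sum]
    have hbound2 : ‖(R ((T ^ N) X)).trace‖ ≤ (n : ℝ) * ‖R'‖ * X.trace.re := by
      calc ‖(R ((T ^ N) X)).trace‖ ≤ n * ‖R ((T ^ N) X)‖ := abs_trace_le_norm _
        _ = n * ‖R' ((T ^ N) X)‖ := by rw [hR'app]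
        _ ≤ n * (‖R'‖ * ‖(T ^ N) X‖) := by
            gcongr
            exact R'.le_opNorm _
        _ ≤ n * (‖R'‖ * s N) := by
            gcongr
        _ ≤ n * (‖R'‖ * s 0) := by
            gcongr
            exact hs_anti (Nat.zero_le N)
        _ = (n : ℝ) * ‖R'‖ * X.trace.re := by
            simp only [hsdef, pow_zero, Module.End.one_apply]
            ring
    have hre_le : ((R X).trace - (R ((T ^ N) X)).trace).re
        ≤ ‖(R X).trace‖ + (n : ℝ) * ‖R'‖ * X.trace.re := by
      have h1 : ((R X).trace - (R ((T ^ N) X)).trace).re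
          ≤ ‖(R X).trace - (R ((T ^ N) X)).trace‖ := Complex.re_le_norm _
      have h2 : ‖(R X).trace - (R ((T ^ N) X)).trace‖
          ≤ ‖(R X).trace‖ + ‖(R ((T ^ N) X)).trace‖ := norm_sub_le _ _
      linarith
    calc (N : ℝ) * ‖(T ^ N) X‖ ≤ (N : ℝ) * s N := by
          gcongr
      _ ≤ ∑ r ∈ Finset.range N, s r := hNsN
      _ = ((R X).trace - (R ((T ^ N) X)).trace).re := hsum_re
      _ ≤ ‖(R X).trace‖ + (n : ℝ) * ‖R'‖ * X.trace.re := hre_le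
  -- pointwise bound for arbitrary A
  have hptA : ∀ A : Matrix (Fin n) (Fin n) ℂ, ∃ C : ℝ, ∀ N : ℕ,
      (N : ℝ) * ‖(T ^ N) A‖ ≤ C := by
    intro A
    obtain ⟨X1, X2, X3, X4, h1, h2, h3, h4, hAeq⟩ := gen_decomp A
    refine ⟨(‖(R X1).trace‖ + (n : ℝ) * ‖R'‖ * X1.trace.re)
      + (‖(R X2).trace‖ + (n : ℝ) * ‖R'‖ * X2.trace.re)
      + (‖(R X3).trace‖ + (n : ℝ) * ‖R'‖ * X3.trace.re)
      + (‖(R X4).trace‖ + (n : ℝ) * ‖R'‖ * X4.trace.re), fun N => ?_⟩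
    have hTA : (T ^ N) A = (T ^ N) X1 - (T ^ N) X2
        + Complex.I • ((T ^ N) X3 - (T ^ N) X4) := by
      rw [hAeq, map_add, map_sub, _root_.map_smul, map_sub]
    have hnA : ‖(T ^ N) A‖ ≤ ‖(T ^ N) X1‖ + ‖(T ^ N) X2‖ + (‖(T ^ N) X3‖ + ‖(T ^ N) X4‖) := by
      rw [hTA]
      calc ‖(T ^ N) X1 - (T ^ N) X2 + Complex.I • ((T ^ N) X3 - (T ^ N) X4)‖
          ≤ ‖(T ^ N) X1 - (T ^ N) X2‖ + ‖Complex.I • ((T ^ N) X3 - (T ^ N) X4)‖ :=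
            norm_add_le _ _
        _ ≤ ‖(T ^ N) X1‖ + ‖(T ^ N) X2‖ + (‖(T ^ N) X3‖ + ‖(T ^ N) X4‖) := by
            rw [norm_smul, Complex.norm_I, one_mul]
            have e1 := norm_sub_le ((T ^ N) X1) ((T ^ N) X2)
            have e2 := norm_sub_le ((T ^ N) X3) ((T ^ N) X4)
            linarith
    have b1 := hC X1 h1 N
    have b2 := hC X2 h2 N
    have b3 := hC X3 h3 N
    have b4 := hC X4 h4 N
    have hN0 : (0:ℝ) ≤ (N:ℝ) := Nat.cast_nonneg N
    have h5 := mul_le_mul_of_nonneg_left hnA hN0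
    rw [mul_add, mul_add, mul_add] at h5
    linarith
  -- uniform operator bound
  have huniform : ∃ C₀ : ℝ, 0 ≤ C₀ ∧ ∀ (N : ℕ) (A : Matrix (Fin n) (Fin n) ℂ),
      (N : ℝ) * ‖(T ^ N) A‖ ≤ C₀ * ‖A‖ := by
    choose c hc using hptA
    refine ⟨∑ p : Fin n × Fin n, |c (Matrix.single p.1 p.2 (1:ℂ))|,
      Finset.sum_nonneg fun p _ => abs_nonneg _, fun N A => ?_⟩
    have hdecomp : A = ∑ p : Fin n × Fin n, A p.1 p.2 • Matrix.single p.1 p.2 (1:ℂ) := by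
      calc A = ∑ i, ∑ j, Matrix.single i j (A i j) :=
            Matrix.matrix_eq_sum_single A
        _ = ∑ i, ∑ j, A i j • Matrix.single i j (1:ℂ) := by
            refine Finset.sum_congr rfl fun i _ => Finset.sum_congr rfl fun j _ => ?_
            rw [Matrix.smul_single, smul_eq_mul, mul_one]
        _ = ∑ p : Fin n × Fin n, A p.1 p.2 • Matrix.single p.1 p.2 (1:ℂ) :=
            (Fintype.sum_prod_type'
              (f := fun i j => A i j • Matrix.single i j (1:ℂ))).symm
    have hTNA : (T ^ N) A
        = ∑ p : Fin n × Fin n, A p.1 p.2 • (T ^ N) (Matrix.single p.1 p.2 (1:ℂ)) := by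
      conv_lhs => rw [hdecomp]
      rw [map_sum]
      exact Finset.sum_congr rfl fun p _ => by rw [_root_.map_smul]
    calc (N : ℝ) * ‖(T ^ N) A‖
        ≤ (N : ℝ) * ∑ p : Fin n × Fin n,
            ‖A p.1 p.2‖ * ‖(T ^ N) (Matrix.single p.1 p.2 (1:ℂ))‖ := by
          have : ‖(T ^ N) A‖ ≤ ∑ p : Fin n × Fin n,
              ‖A p.1 p.2‖ * ‖(T ^ N) (Matrix.single p.1 p.2 (1:ℂ))‖ := by
            rw [hTNA]
            refine le_trans (norm_sum_le _ _) (Finset.sum_le_sum fun p _ => ?_)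
            rw [norm_smul]
          have hN0 : (0:ℝ) ≤ (N:ℝ) := Nat.cast_nonneg N
          exact mul_le_mul_of_nonneg_left this hN0
      _ = ∑ p : Fin n × Fin n,
            ‖A p.1 p.2‖ * ((N : ℝ) * ‖(T ^ N) (Matrix.single p.1 p.2 (1:ℂ))‖) := by
          rw [Finset.mul_sum]
          exact Finset.sum_congr rfl fun p _ => by ring
      _ ≤ ∑ p : Fin n × Fin n, ‖A‖ * |c (Matrix.single p.1 p.2 (1:ℂ))| := by
          refine Finset.sum_le_sum fun p _ => ?_
          have hent : ‖A p.1 p.2‖ ≤ ‖A‖ := A.norm_entry_le_entrywise_sup_norm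
          have hbnd : (N : ℝ) * ‖(T ^ N) (Matrix.single p.1 p.2 (1:ℂ))‖
              ≤ |c (Matrix.single p.1 p.2 (1:ℂ))| :=
            le_trans (hc _ N) (le_abs_self _)
          have h0 : (0:ℝ) ≤ (N : ℝ) * ‖(T ^ N) (Matrix.single p.1 p.2 (1:ℂ))‖ :=
            mul_nonneg (Nat.cast_nonneg N) (norm_nonneg _)
          exact mul_le_mul hent hbnd h0 (norm_nonneg A)
      _ = (∑ p : Fin n × Fin n, |c (Matrix.single p.1 p.2 (1:ℂ))|) * ‖A‖ := by
          rw [Finset.sum_mul]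
          exact Finset.sum_congr rfl fun p _ => by ring
  obtain ⟨C₀, hC₀nn, hC₀⟩ := huniform
  -- operator norm bound
  have hopn : ∀ N : ℕ, 1 ≤ N → ‖T' ^ N‖ ≤ (C₀ + 1) / N := by
    intro N hN
    have hNpos : (0:ℝ) < N := by exact_mod_cast hN
    apply ContinuousLinearMap.opNorm_le_bound _ (by positivity)
    intro A
    erw [hT'pow]
    rw [div_mul_eq_mul_div, le_div_iff₀ hNpos]
    have := hC₀ N A
    nlinarith [norm_nonneg A]
  have hsummable : Summable (fun r : ℕ => ((r : ℝ) + 1) * ‖T' ^ r‖) :=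
    summable_mul_pow T' (C₀ + 1) hopn
  have hterm0 : Filter.Tendsto (fun r : ℕ => ((r : ℝ) + 1) * ‖T' ^ r‖)
      Filter.atTop (nhds 0) := hsummable.tendsto_atTop_zero
  -- norm bounds on traces
  have htbound : ∀ r : ℕ, ‖((T ^ r) ρ).trace‖ ≤ (n : ℝ) * (‖T' ^ r‖ * ‖ρ‖) := by
    intro r
    calc ‖((T ^ r) ρ).trace‖ ≤ n * ‖(T ^ r) ρ‖ := abs_trace_le_norm _
      _ = n * ‖(T' ^ r) ρ‖ := by rw [hT'pow]
      _ ≤ (n : ℝ) * (‖T' ^ r‖ * ‖ρ‖) := by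
          gcongr
          exact (T' ^ r).le_opNorm ρ
  -- summability of the series
  set a : ℕ → ℂ := fun r => ((r : ℂ) + 1) * (PP (Φ ((T ^ r) ρ))).trace with hadef
  have ha_eq : ∀ r : ℕ, a r = ((r : ℂ) + 1) * (((T ^ r) ρ).trace - ((T ^ (r+1)) ρ).trace) := by
    intro r
    rw [hadef]
    simp only []
    rw [hstep]
  have hsummable_a : Summable a := by
    have hv : Summable (fun r : ℕ => ((r : ℝ) + 1) * ‖T' ^ (r + 1)‖) := by
      have hshift := (summable_nat_add_iff
        (f := fun r : ℕ => ((r : ℝ) + 1) * ‖T' ^ r‖) 1).mpr hsummable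
      apply Summable.of_nonneg_of_le (fun r => by positivity) _ hshift
      intro r
      have : ((r : ℝ) + 1) ≤ (((r + 1 : ℕ) : ℝ) + 1) := by push_cast; linarith
      exact mul_le_mul_of_nonneg_right this (norm_nonneg _)
    have hmaj : Summable (fun r : ℕ => (n : ℝ) * ‖ρ‖ *
        (((r : ℝ) + 1) * ‖T' ^ r‖ + ((r : ℝ) + 1) * ‖T' ^ (r + 1)‖)) :=
      (hsummable.add hv).mul_left _
    apply Summable.of_norm
    apply Summable.of_nonneg_of_le (fun r => norm_nonneg _) _ hmaj
    intro r
    rw [ha_eq]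
    have hnc : ‖((r : ℂ) + 1)‖ = (r : ℝ) + 1 := by
      have : ((r : ℂ) + 1) = ((r + 1 : ℕ) : ℂ) := by push_cast; ring
      rw [this, Complex.norm_natCast]
      push_cast; ring
    rw [norm_mul, hnc]
    have h1 : ‖((T ^ r) ρ).trace - ((T ^ (r+1)) ρ).trace‖
        ≤ ‖((T ^ r) ρ).trace‖ + ‖((T ^ (r+1)) ρ).trace‖ := norm_sub_le _ _
    have h2 := htbound r
    have h3 := htbound (r + 1)
    have hr1 : (0:ℝ) ≤ (r : ℝ) + 1 := by positivity
    calc ((r : ℝ) + 1) * ‖((T ^ r) ρ).trace - ((T ^ (r+1)) ρ).trace‖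
        ≤ ((r : ℝ) + 1) * ((n : ℝ) * (‖T' ^ r‖ * ‖ρ‖) + (n : ℝ) * (‖T' ^ (r+1)‖ * ‖ρ‖)) := by
          apply mul_le_mul_of_nonneg_left _ hr1
          push_cast at h1 h2 h3 ⊢
          linarith
      _ = (n : ℝ) * ‖ρ‖ * (((r : ℝ) + 1) * ‖T' ^ r‖ + ((r : ℝ) + 1) * ‖T' ^ (r + 1)‖) := by
          push_cast
          ring
  -- partial sums identity
  have hS : ∀ N : ℕ, ∑ r ∈ Finset.range N, a r
      = (R ρ).trace - (R ((T ^ N) ρ)).trace - (N : ℂ) * ((T ^ N) ρ).trace := by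
    intro N
    induction N with
    | zero => simp
    | succ N ih =>
        rw [Finset.sum_range_succ, ih, ha_eq]
        have htl : (R ((T ^ N) ρ)).trace - (R ((T ^ (N+1)) ρ)).trace = ((T ^ N) ρ).trace := by
          rw [pow_succ', Module.End.mul_apply, htele]
        push_cast
        linear_combination -htl
  -- limits
  have hTnorm0 : Filter.Tendsto (fun N : ℕ => ‖T' ^ N‖) Filter.atTop (nhds 0) := by
    apply squeeze_zero (fun N => norm_nonneg _) (fun N => ?_) hterm0
    have h1 : (0:ℝ) ≤ (N:ℝ) := Nat.cast_nonneg N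
    nlinarith [norm_nonneg (T' ^ N)]
  have hlim1 : Filter.Tendsto (fun N : ℕ => (R ((T ^ N) ρ)).trace) Filter.atTop (nhds 0) := by
    have hb : Filter.Tendsto (fun N : ℕ => ((n : ℝ) * ‖R'‖ * ‖ρ‖) * ‖T' ^ N‖)
        Filter.atTop (nhds 0) := by
      simpa using hTnorm0.const_mul ((n : ℝ) * ‖R'‖ * ‖ρ‖)
    apply squeeze_zero_norm _ hb
    intro N
    calc ‖(R ((T ^ N) ρ)).trace‖ ≤ n * ‖R ((T ^ N) ρ)‖ := abs_trace_le_norm _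
        _ = n * ‖R' ((T' ^ N) ρ)‖ := by rw [hR'app, hT'pow]
        _ ≤ n * (‖R'‖ * (‖T' ^ N‖ * ‖ρ‖)) := by
            gcongr
            exact le_trans (R'.le_opNorm _) (mul_le_mul_of_nonneg_left ((T' ^ N).le_opNorm ρ) (norm_nonneg _))
        _ = ((n : ℝ) * ‖R'‖ * ‖ρ‖) * ‖T' ^ N‖ := by ring
  have hlim2 : Filter.Tendsto (fun N : ℕ => (N : ℂ) * ((T ^ N) ρ).trace)
      Filter.atTop (nhds 0) := by
    have hb2 : Filter.Tendsto (fun N : ℕ => ((n : ℝ) * ‖ρ‖) * (((N : ℝ) + 1) * ‖T' ^ N‖))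
        Filter.atTop (nhds 0) := by
      simpa using hterm0.const_mul ((n : ℝ) * ‖ρ‖)
    apply squeeze_zero_norm _ hb2
    intro N
    have h2 := htbound N
    have hN1 : (N : ℝ) ≤ (N : ℝ) + 1 := by linarith
    calc ‖(N : ℂ) * ((T ^ N) ρ).trace‖ = (N : ℝ) * ‖((T ^ N) ρ).trace‖ := by
            rw [norm_mul, Complex.norm_natCast]
        _ ≤ ((N : ℝ) + 1) * ((n : ℝ) * (‖T' ^ N‖ * ‖ρ‖)) := by
            apply mul_le_mul hN1 h2 (norm_nonneg _) (by positivity)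
        _ = ((n : ℝ) * ‖ρ‖) * (((N : ℝ) + 1) * ‖T' ^ N‖) := by ring
  have hlimS : Filter.Tendsto (fun N : ℕ => ∑ r ∈ Finset.range N, a r)
      Filter.atTop (nhds ((R ρ).trace)) := by
    have : Filter.Tendsto
        (fun N : ℕ => (R ρ).trace - (R ((T ^ N) ρ)).trace - (N : ℂ) * ((T ^ N) ρ).trace)
        Filter.atTop (nhds ((R ρ).trace - 0 - 0)) :=
      (Filter.Tendsto.sub (tendsto_const_nhds.sub hlim1) hlim2)
    rw [sub_zero, sub_zero] at this
    exact (Filter.tendsto_congr fun N => hS N).mpr this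
  have h1 := hsummable_a.hasSum
  have h2 := h1.tendsto_sum_nat
  have h3 : ∑' r, a r = (R ρ).trace := tendsto_nhds_unique h2 hlimS
  rw [h3] at h1
  exact h1
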